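/- Let A¹, ..., Aᵖ be symmetric operators on ℝⁿ, n ≥ 2, that are simultaneously diagonalizable with eigenvalues λᵢ^σ = ⟨A^σ eᵢ, eᵢ⟩ in a common orthonormal eigenbasis e₁,...,eₙ. Set H^σ = Tr A^σ and T^{στ} = Tr(A^σ A^τ). Suppose there exist constants c₁', c₂' such that for all i: Σ_σ (H^σ λᵢ^σ − (λᵢ^σ)²) = c₁', and for all i, j: Σ_{σ,τ} (T^{στ} λᵢ^σ λⱼ^τ + λᵢ^σ λⱼ^σ λᵢ^τ λⱼ^τ − λᵢ^σ λⱼ^σ (λⱼ^τ)² − λⱼ^σ λᵢ^σ (λᵢ^τ)²) = c₂'. Then (n−1)·c₂' = (c₁')². -/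

import Mathlib

open Matrix

theorem stmt3 (n p : ℕ) (hn : 2 ≤ n) (A : Fin p → Matrix (Fin n) (Fin n) ℝ)
    (hsym : ∀ σ, (A σ).IsSymm)
    (P : Matrix (Fin n) (Fin n) ℝ) (hP : P ∈ Matrix.orthogonalGroup (Fin n) ℝ)
    (hdiag : ∀ σ, (Pᵀ * A σ * P).IsDiag)
    (lam : Fin n → Fin p → ℝ) (hlam : ∀ i σ, lam i σ = (Pᵀ * A σ * P) i i)
    (c₁ c₂ : ℝ)
    (h1 : ∀ i, ∑ σ, ((A σ).trace * lam i σ - (lam i σ) ^ 2) = c₁)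
    (h2 : ∀ i j, ∑ σ, ∑ τ,
        ((A σ * A τ).trace * lam i σ * lam j τ
          + lam i σ * lam j σ * lam i τ * lam j τ
          - lam i σ * lam j σ * (lam j τ) ^ 2
          - lam j σ * lam i σ * (lam i τ) ^ 2) = c₂) :
    ((n : ℝ) - 1) * c₂ = c₁ ^ 2 := by
  haveI : NeZero n := ⟨by omega⟩
  have hstar : star P = Pᵀ := by
    ext i j; simp [Matrix.star_apply]
  have hPPt : P * Pᵀ = 1 := by
    have := (Matrix.mem_orthogonalGroup_iff (Fin n) ℝ).mp hP
    exact this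
  have hcancel : ∀ X : Matrix (Fin n) (Fin n) ℝ, P * (Pᵀ * X) = X := by
    intro X; rw [← Matrix.mul_assoc, hPPt, Matrix.one_mul]
  -- trace of A σ
  have htr : ∀ σ, (A σ).trace = ∑ k, lam k σ := by
    intro σ
    have h : (A σ).trace = (Pᵀ * A σ * P).trace := by
      rw [Matrix.trace_mul_cycle, hPPt, Matrix.one_mul]
    rw [h, Matrix.trace]
    exact Finset.sum_congr rfl fun k _ => (hlam k σ).symm
  -- trace of A σ * A τ
  have htr2 : ∀ σ τ, (A σ * A τ).trace = ∑ k, lam k σ * lam k τ := by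
    intro σ τ
    have hDD : (Pᵀ * A σ * P) * (Pᵀ * A τ * P) = Pᵀ * (A σ * A τ) * P := by
      simp only [Matrix.mul_assoc, hcancel]
    have h : (A σ * A τ).trace = ((Pᵀ * A σ * P) * (Pᵀ * A τ * P)).trace := by
      rw [hDD, Matrix.trace_mul_cycle, hPPt, Matrix.one_mul]
    rw [h, Matrix.trace]
    refine Finset.sum_congr rfl fun k _ => ?_
    rw [Matrix.diag_apply, Matrix.mul_apply]
    rw [Finset.sum_eq_single k]
    · rw [hlam k σ, hlam k τ]
    · intro j _ hj
      rw [(hdiag σ) (Ne.symm hj), zero_mul]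
    · intro h; exact absurd (Finset.mem_univ k) h
  -- the Gram-like quantity
  set b : Fin n → Fin n → ℝ := fun i j => ∑ σ, lam i σ * lam j σ with hb
  have hbsym : ∀ i j, b i j = b j i := fun i j =>
    Finset.sum_congr rfl fun σ _ => mul_comm _ _
  have hb1 : ∀ i, ∑ k, b i k = c₁ + b i i := by
    intro i
    have := h1 i
    simp only [htr, Finset.sum_sub_distrib, Finset.sum_mul] at this
    rw [Finset.sum_comm] at this
    have e1 : ∑ k, ∑ σ, lam k σ * lam i σ = ∑ k, b i k :=
      Finset.sum_congr rfl fun k _ => (hbsym i k).symm ▸ rfl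
    have e2 : ∑ σ, lam i σ ^ 2 = b i i :=
      Finset.sum_congr rfl fun σ _ => (sq (lam i σ))
    rw [e1, e2] at this
    linarith
  have hb2 : ∀ i j, (∑ k, b i k * b j k) + b i j * b i j - b i j * b j j - b i j * b i i = c₂ := by
    intro i j
    have h0 := h2 i j
    have key : ∀ σ, ∑ τ, ((A σ * A τ).trace * lam i σ * lam j τ
          + lam i σ * lam j σ * lam i τ * lam j τ
          - lam i σ * lam j σ * (lam j τ) ^ 2
          - lam j σ * lam i σ * (lam i τ) ^ 2)
        = (∑ k, ∑ τ, (lam k σ * lam i σ) * (lam k τ * lam j τ))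
          + lam i σ * lam j σ * b i j - lam i σ * lam j σ * b j j
          - lam j σ * lam i σ * b i i := by
      intro σ
      simp only [htr2, hb]
      rw [Finset.mul_sum, Finset.mul_sum, Finset.mul_sum]
      rw [show (∑ k, ∑ τ, (lam k σ * lam i σ) * (lam k τ * lam j τ))
          = ∑ τ, ∑ k, (lam k σ * lam i σ) * (lam k τ * lam j τ) from Finset.sum_comm]
      rw [← Finset.sum_add_distrib, ← Finset.sum_sub_distrib, ← Finset.sum_sub_distrib]
      refine Finset.sum_congr rfl fun τ _ => ?_
      have e : ∑ k, (lam k σ * lam i σ) * (lam k τ * lam j τ)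
          = (∑ k, lam k σ * lam k τ) * lam i σ * lam j τ := by
        rw [Finset.sum_mul, Finset.sum_mul]
        exact Finset.sum_congr rfl fun k _ => by ring
      rw [e]; ring
    rw [Finset.sum_congr rfl fun σ _ => key σ] at h0
    simp only [Finset.sum_add_distrib, Finset.sum_sub_distrib, ← Finset.sum_mul] at h0
    have e3 : ∑ σ, ∑ k, ∑ τ, (lam k σ * lam i σ) * (lam k τ * lam j τ)
        = ∑ k, b i k * b j k := by
      rw [Finset.sum_comm]
      refine Finset.sum_congr rfl fun k _ => ?_
      calc ∑ σ, ∑ τ, (lam k σ * lam i σ) * (lam k τ * lam j τ)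
          = (∑ σ, lam k σ * lam i σ) * (∑ τ, lam k τ * lam j τ) :=
            (Finset.sum_mul_sum _ _ _ _).symm
        _ = b i k * b j k := by rw [hbsym i k, hbsym j k]
    rw [e3] at h0
    have e4 : (∑ σ, lam i σ * lam j σ) = b i j := rfl
    have e5 : (∑ σ, lam j σ * lam i σ) = b i j := hbsym j i
    rw [e4, e5] at h0
    linarith
  -- finishing algebra
  set i0 : Fin n := 0 with hi0
  have hii := hb2 i0 i0
  have H : ∑ j, ((∑ k, b i0 k * b j k) + b i0 j * b i0 j - b i0 j * b j j
      - b i0 j * b i0 i0) = (n : ℝ) * c₂ := by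
    rw [Finset.sum_congr rfl fun j _ => hb2 i0 j]
    simp [mul_comm]
  simp only [Finset.sum_add_distrib, Finset.sum_sub_distrib] at H
  have e6 : ∑ j, ∑ k, b i0 k * b j k
      = c₁ * (∑ k, b i0 k) + ∑ k, b i0 k * b k k := by
    rw [Finset.sum_comm]
    have : ∀ k, ∑ j, b i0 k * b j k = b i0 k * c₁ + b i0 k * b k k := by
      intro k
      rw [← Finset.mul_sum]
      have : ∑ j, b j k = c₁ + b k k := by
        rw [Finset.sum_congr rfl fun j _ => hbsym j k]
        exact hb1 k
      rw [this]; ring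
    rw [Finset.sum_congr rfl fun k _ => this k]
    rw [Finset.sum_add_distrib, ← Finset.sum_mul]
    ring
  have e7 : ∑ j, b i0 j * b i0 i0 = (c₁ + b i0 i0) * b i0 i0 := by
    rw [← Finset.sum_mul, hb1]
  rw [e6, e7, hb1 i0] at H
  have : (n : ℝ) * c₂ = c₁ ^ 2 + c₂ := by nlinarith [hii, H]
  linarith
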